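/- Let 1 ≤ p ≤ q < ∞. For all sequences x, y with ‖x‖_{wℓ^p_q} < ∞ and ‖y‖_{wℓ^p_q} < ∞, the quasi-triangle inequality ‖x + y‖_{wℓ^p_q} ≤ 2(‖x‖_{wℓ^p_q} + ‖y‖_{wℓ^p_q}) holds; moreover ‖αx‖_{wℓ^p_q} = |α| ‖x‖_{wℓ^p_q} for every scalar α, and ‖x‖_{wℓ^p_q} = 0 if and only if x = 0. Hence ‖·‖_{wℓ^p_q} is a quasi-norm on wℓ^p_q. -/

import Mathlib

open scoped ENNReal NNReal BigOperators

/-- The discrete "ball" `S_{m,N} = {m-N, …, m+N}` as a finite set of integers. -/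
noncomputable def S (m : ℤ) (N : ℕ) : Finset ℤ := Finset.Icc (m - N) (m + N)

open Classical in
/-- The cardinality of `{k ∈ S_{m,N} : |x_k| > γ}`. -/
noncomputable def weakCard (x : ℤ → ℂ) (m : ℤ) (N : ℕ) (γ : ℝ≥0) : ℕ :=
  ((S m N).filter (fun k => γ < ‖x k‖₊)).card

/-- The weak type discrete Morrey norm `‖x‖_{wℓ^p_q}`. -/
noncomputable def wMorreyNorm (p q : ℝ) (x : ℤ → ℂ) : ℝ≥0∞ :=
  ⨆ (m : ℤ) (N : ℕ) (γ : ℝ≥0) (_ : 0 < γ),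
    (2 * (N : ℝ≥0∞) + 1) ^ (1 / q - 1 / p) * (γ : ℝ≥0∞) *
      (weakCard x m N γ : ℝ≥0∞) ^ (1 / p)

noncomputable def Tm (p q : ℝ) (x : ℤ → ℂ) (m : ℤ) (N : ℕ) (γ : ℝ≥0) : ℝ≥0∞ :=
  (2 * (N : ℝ≥0∞) + 1) ^ (1 / q - 1 / p) * (γ : ℝ≥0∞) *
    (weakCard x m N γ : ℝ≥0∞) ^ (1 / p)

lemma wM_eq (p q : ℝ) (x : ℤ → ℂ) :
    wMorreyNorm p q x = ⨆ (m : ℤ) (N : ℕ) (γ : ℝ≥0) (_ : 0 < γ), Tm p q x m N γ := rfl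

lemma Tm_le_wM (p q : ℝ) (x : ℤ → ℂ) (m : ℤ) (N : ℕ) {γ : ℝ≥0} (hγ : 0 < γ) :
    Tm p q x m N γ ≤ wMorreyNorm p q x := by
  rw [wM_eq]
  exact le_iSup_of_le m (le_iSup_of_le N (le_iSup_of_le γ (le_iSup_of_le hγ le_rfl)))

lemma wM_le (p q : ℝ) (x : ℤ → ℂ) {L : ℝ≥0∞}
    (h : ∀ m N γ, 0 < γ → Tm p q x m N γ ≤ L) : wMorreyNorm p q x ≤ L := by
  rw [wM_eq]
  exact iSup_le fun m => iSup_le fun N => iSup_le fun γ => iSup_le fun hγ => h m N γ hγ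

lemma wM_zero (p q : ℝ) (hp : 1 ≤ p) : wMorreyNorm p q (0 : ℤ → ℂ) = 0 := by
  have hp0 : 0 < 1 / p := by positivity
  refine le_antisymm (wM_le p q _ fun m N γ hγ => ?_) (zero_le)
  have h0 : weakCard (0 : ℤ → ℂ) m N γ = 0 := by
    simp [weakCard, Finset.filter_eq_empty_iff, hγ.le, not_lt]
  simp only [Tm, h0, Nat.cast_zero, ENNReal.zero_rpow_of_pos hp0, mul_zero, le_refl]

lemma weakCard_smul (α : ℂ) (hα : α ≠ 0) (x : ℤ → ℂ) (m : ℤ) (N : ℕ) (γ : ℝ≥0) :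
    weakCard (α • x) m N γ = weakCard x m N (γ / ‖α‖₊) := by
  have hα' : ‖α‖₊ ≠ 0 := by simpa using hα
  unfold weakCard
  congr 1
  apply Finset.filter_congr
  intro k _
  simp only [Pi.smul_apply, smul_eq_mul, nnnorm_mul]
  rw [div_lt_iff₀ (pos_iff_ne_zero.2 hα'), mul_comm]

lemma wM_smul_le (p q : ℝ) (hp : 1 ≤ p) (α : ℂ) (x : ℤ → ℂ) :
    wMorreyNorm p q (α • x) ≤ (‖α‖₊ : ℝ≥0∞) * wMorreyNorm p q x := by
  rcases eq_or_ne α 0 with rfl | hα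
  · simp [wM_zero p q hp]
  have hα' : ‖α‖₊ ≠ 0 := by simpa using hα
  refine wM_le p q _ fun m N γ hγ => ?_
  have hδ : 0 < γ / ‖α‖₊ := by positivity
  have hγeq : (γ : ℝ≥0∞) = (‖α‖₊ : ℝ≥0∞) * ((γ / ‖α‖₊ : ℝ≥0) : ℝ≥0∞) := by
    rw [← ENNReal.coe_mul, mul_div_cancel₀ _ hα']
  have hTm : Tm p q (α • x) m N γ = (‖α‖₊ : ℝ≥0∞) * Tm p q x m N (γ / ‖α‖₊) := by
    rw [Tm, Tm, weakCard_smul α hα, hγeq]; ring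
  rw [hTm]
  exact mul_le_mul_right (Tm_le_wM p q x m N hδ) _

lemma wM_smul (p q : ℝ) (hp : 1 ≤ p) (α : ℂ) (x : ℤ → ℂ) :
    wMorreyNorm p q (α • x) = (‖α‖₊ : ℝ≥0∞) * wMorreyNorm p q x := by
  rcases eq_or_ne α 0 with rfl | hα
  · simp [wM_zero p q hp]
  refine le_antisymm (wM_smul_le p q hp α x) ?_
  have h2 := wM_smul_le p q hp α⁻¹ (α • x)
  rw [smul_smul, inv_mul_cancel₀ hα, one_smul] at h2
  calc (‖α‖₊ : ℝ≥0∞) * wMorreyNorm p q x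
      ≤ (‖α‖₊ : ℝ≥0∞) * ((‖α⁻¹‖₊ : ℝ≥0∞) * wMorreyNorm p q (α • x)) :=
        mul_le_mul_right h2 _
    _ = ((‖α‖₊ * ‖α⁻¹‖₊ : ℝ≥0) : ℝ≥0∞) * wMorreyNorm p q (α • x) := by
        rw [ENNReal.coe_mul]; ring
    _ = wMorreyNorm p q (α • x) := by
        rw [← nnnorm_mul, mul_inv_cancel₀ hα]; simp

theorem stmt8 (p q : ℝ) (hp : 1 ≤ p) (hpq : p ≤ q) :
    (∀ x y : ℤ → ℂ, wMorreyNorm p q x < ⊤ → wMorreyNorm p q y < ⊤ →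
      wMorreyNorm p q (x + y) ≤ 2 * (wMorreyNorm p q x + wMorreyNorm p q y)) ∧
    (∀ (α : ℂ) (x : ℤ → ℂ), wMorreyNorm p q (α • x) = (‖α‖₊ : ℝ≥0∞) * wMorreyNorm p q x) ∧
    (∀ x : ℤ → ℂ, wMorreyNorm p q x = 0 ↔ x = 0) := by
  have hppos : (0:ℝ) < p := by linarith
  have hip_pos : 0 < 1 / p := by positivity
  have hip_le : 1 / p ≤ 1 := by rw [div_le_one hppos]; exact hp
  refine ⟨?_, fun α x => wM_smul p q hp α x, ?_⟩
  · intro x y _ _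
    refine wM_le p q _ fun m N γ hγ => ?_
    set δ : ℝ≥0 := γ / 2 with hδdef
    have hδ : 0 < δ := by positivity
    have hcard : weakCard (x + y) m N γ ≤ weakCard x m N δ + weakCard y m N δ := by
      unfold weakCard
      refine le_trans (Finset.card_le_card ?_) (Finset.card_union_le _ _)
      intro k hk
      rw [Finset.mem_filter] at hk
      rw [Finset.mem_union, Finset.mem_filter, Finset.mem_filter]
      by_contra hcon
      push_neg at hcon
      have h1 : ‖x k‖₊ ≤ δ := hcon.1 hk.1
      have h2 : ‖y k‖₊ ≤ δ := hcon.2 hk.1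
      have hle : ‖(x + y) k‖₊ ≤ γ := by
        calc ‖(x + y) k‖₊ = ‖x k + y k‖₊ := rfl
          _ ≤ ‖x k‖₊ + ‖y k‖₊ := nnnorm_add_le _ _
          _ ≤ δ + δ := add_le_add h1 h2
          _ = γ := by rw [hδdef, add_halves]
      exact absurd hk.2 (not_lt.2 hle)
    have hγ2 : (γ : ℝ≥0∞) = 2 * (δ : ℝ≥0∞) := by
      have : (2 * δ : ℝ≥0) = γ := by rw [hδdef, two_mul, add_halves]
      rw [← this]; push_cast; ring
    set C : ℝ≥0∞ := (2 * (N : ℝ≥0∞) + 1) ^ (1 / q - 1 / p) with hC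
    have h1 := Tm_le_wM p q x m N hδ
    have h2 := Tm_le_wM p q y m N hδ
    calc Tm p q (x + y) m N γ
        = C * (γ : ℝ≥0∞) * (weakCard (x + y) m N γ : ℝ≥0∞) ^ (1 / p) := rfl
      _ ≤ C * (γ : ℝ≥0∞) *
          ((weakCard x m N δ + weakCard y m N δ : ℕ) : ℝ≥0∞) ^ (1 / p) :=
          mul_le_mul_right (ENNReal.rpow_le_rpow (Nat.cast_le.2 hcard) hip_pos.le) _
      _ ≤ C * (γ : ℝ≥0∞) *
          ((weakCard x m N δ : ℝ≥0∞) ^ (1 / p) + (weakCard y m N δ : ℝ≥0∞) ^ (1 / p)) := by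
          push_cast
          exact mul_le_mul_right (ENNReal.rpow_add_le_add_rpow _ _ hip_pos.le hip_le) _
      _ = 2 * (C * (δ : ℝ≥0∞) * (weakCard x m N δ : ℝ≥0∞) ^ (1 / p)) +
          2 * (C * (δ : ℝ≥0∞) * (weakCard y m N δ : ℝ≥0∞) ^ (1 / p)) := by
          rw [hγ2]; ring
      _ ≤ 2 * wMorreyNorm p q x + 2 * wMorreyNorm p q y :=
          add_le_add (mul_le_mul_right h1 2) (mul_le_mul_right h2 2)
      _ = 2 * (wMorreyNorm p q x + wMorreyNorm p q y) := (mul_add _ _ _).symm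
  · intro x
    constructor
    · intro h
      by_contra hx
      obtain ⟨k, hk⟩ := Function.ne_iff.mp hx
      simp only [Pi.zero_apply] at hk
      have hnorm : (0 : ℝ≥0) < ‖x k‖₊ := by simpa [pos_iff_ne_zero] using hk
      set γ : ℝ≥0 := ‖x k‖₊ / 2 with hγdef
      have hγ : 0 < γ := by positivity
      have hlt : γ < ‖x k‖₊ := by rw [hγdef]; exact half_lt_self hnorm
      have hcard : 1 ≤ weakCard x k 0 γ := by
        rw [Nat.one_le_iff_ne_zero, ← Nat.pos_iff_ne_zero]
        apply Finset.card_pos.2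
        exact ⟨k, Finset.mem_filter.2 ⟨by simp [S], hlt⟩⟩
      have hTm : (γ : ℝ≥0∞) ≤ Tm p q x k 0 γ := by
        rw [Tm]
        simp only [Nat.cast_zero, mul_zero, zero_add, ENNReal.one_rpow, one_mul]
        nth_rewrite 1 [← mul_one (γ : ℝ≥0∞)]
        refine mul_le_mul_right ?_ _
        calc (1 : ℝ≥0∞) = (1 : ℝ≥0∞) ^ (1 / p) := (ENNReal.one_rpow _).symm
          _ ≤ (weakCard x k 0 γ : ℝ≥0∞) ^ (1 / p) :=
            ENNReal.rpow_le_rpow (by exact_mod_cast hcard) hip_pos.le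
      have : (γ : ℝ≥0∞) ≤ 0 := hTm.trans ((Tm_le_wM p q x k 0 hγ).trans h.le)
      simp only [nonpos_iff_eq_zero, ENNReal.coe_eq_zero] at this
      exact absurd this hγ.ne'
    · rintro rfl
      exact wM_zero p q hp
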